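/- Let K be a field of characteristic zero, V a finite-dimensional super-vector space with dim V_0 > 0 and dim V_1 > 0, and n ≥ 1. Then the space of sl(V)-invariants in V^{⊗n} is zero, where the Lie superalgebra sl(V) (even and odd endomorphisms of supertrace zero) acts on V^{⊗n} by super-derivations. Consequently, for a quiver vertex that is a source and ordinary (both graded components of its superspace nonzero), there are no nonzero multilinear semi-invariants involving only outgoing edges at that vertex. -/

import Mathlib

open Module
open scoped TensorProduct

variable (K : Type) [Field K]
variable (V₀ V₁ : Type) [AddCommGroup V₀] [AddCommGroup V₁]
  [Module K V₀] [Module K V₁]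

/-- The grading involution `J` of `V = V₀ ⊕ V₁`: identity on `V₀`, minus the
identity on `V₁`.  For homogeneous `v`, `J v = (−1)^{|v|} v`. -/
def gradeInv : (V₀ × V₁) →ₗ[K] (V₀ × V₁) :=
  (LinearMap.fst K V₀ V₁).prod (-(LinearMap.snd K V₀ V₁))

/-- `J^p` for a parity `p`. -/
def gradeInvPow (p : ZMod 2) : (V₀ × V₁) →ₗ[K] (V₀ × V₁) :=
  if p = 0 then LinearMap.id else gradeInv K V₀ V₁

/-- A homogeneous endomorphism of parity `p` of the super-vector space
`V = V₀ ⊕ V₁`. -/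
def IsHomogEnd (φ : (V₀ × V₁) →ₗ[K] (V₀ × V₁)) (p : ZMod 2) : Prop :=
  if p = 0 then
    (∀ v : V₀, (φ (v, 0)).2 = 0) ∧ (∀ v : V₁, (φ (0, v)).1 = 0)
  else
    (∀ v : V₀, (φ (v, 0)).1 = 0) ∧ (∀ v : V₁, (φ (0, v)).2 = 0)

/-- The supertrace of an endomorphism of `V = V₀ ⊕ V₁`:
`tr(φ₀₀) − tr(φ₁₁)`. -/
noncomputable def strEnd (φ : (V₀ × V₁) →ₗ[K] (V₀ × V₁)) : K :=
  LinearMap.trace K V₀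
      ((LinearMap.fst K V₀ V₁).comp (φ.comp (LinearMap.inl K V₀ V₁))) -
    LinearMap.trace K V₁
      ((LinearMap.snd K V₀ V₁).comp (φ.comp (LinearMap.inr K V₀ V₁)))

/-- The action of a homogeneous endomorphism `φ` of parity `p` on `V^{⊗n}` as a
super-derivation:
`φ(v₁ ⊗ ⋯ ⊗ vₙ) = Σᵢ (−1)^{|φ|(|v₁|+⋯+|v_{i−1}|)} v₁ ⊗ ⋯ ⊗ φ(vᵢ) ⊗ ⋯ ⊗ vₙ`,
implemented by twisting the factors before position `i` with `J^p`. -/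
noncomputable def superDerAction (n : ℕ) (φ : (V₀ × V₁) →ₗ[K] (V₀ × V₁))
    (p : ZMod 2) :
    (⨂[K] (_ : Fin n), (V₀ × V₁)) →ₗ[K] ⨂[K] (_ : Fin n), (V₀ × V₁) :=
  ∑ i : Fin n, PiTensorProduct.map (fun k =>
    if k < i then gradeInvPow K V₀ V₁ p else if k = i then φ else LinearMap.id)

/-- Applying a product of shifted endomorphisms to an eigenvector. -/
lemma prod_shift_apply_eigen {T : Type*} [AddCommGroup T] [Module K T]
    (L : Module.End K T) (v : T) (μ : K) (hv : L v = μ • v) :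
    ∀ l : List K,
      ((l.map fun c => L - c • (1 : Module.End K T)).prod) v
        = ((l.map fun c => μ - c).prod) • v := by
  intro l
  induction l with
  | nil => simp
  | cons c l ih =>
    simp only [List.map_cons, List.prod_cons, Module.End.mul_apply, ih,
      LinearMap.sub_apply, LinearMap.smul_apply, Module.End.one_apply,
      map_smul, hv, smul_smul, sub_smul]
    module

/-- a special case of Sergeev's theorem: over a field of
characteristic zero, if both `V₀` and `V₁` are nonzero and `n ≥ 1`, then the
space of `sl(V)`-invariants in `V^{⊗n}` is zero. -/
theorem stmt_14 [CharZero K] [FiniteDimensional K V₀] [FiniteDimensional K V₁]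
    (h₀ : 0 < finrank K V₀) (h₁ : 0 < finrank K V₁) (n : ℕ) (hn : 1 ≤ n)
    (t : ⨂[K] (_ : Fin n), (V₀ × V₁))
    (ht : ∀ (φ : (V₀ × V₁) →ₗ[K] (V₀ × V₁)) (p : ZMod 2),
      IsHomogEnd K V₀ V₁ φ p → strEnd K V₀ V₁ φ = 0 →
      superDerAction K V₀ V₁ n φ p t = 0) :
    t = 0 := by
  classical
  set d₀ := finrank K V₀ with hd₀
  set d₁ := finrank K V₁ with hd₁
  -- the traceless even endomorphism φ = d₁ • id on V₀, d₀ • id on V₁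
  set φ : (V₀ × V₁) →ₗ[K] (V₀ × V₁) :=
    (((d₁ : K) • LinearMap.fst K V₀ V₁).prod
      ((d₀ : K) • LinearMap.snd K V₀ V₁)) with hφ
  have hφ_app : ∀ v : V₀ × V₁, φ v = ((d₁ : K) • v.1, (d₀ : K) • v.2) := by
    intro v; rfl
  have hhom : IsHomogEnd K V₀ V₁ φ 0 := by
    simp only [IsHomogEnd, if_pos rfl]
    constructor <;> intro v <;> simp [hφ_app]
  have hstr : strEnd K V₀ V₁ φ = 0 := by
    have e1 : (LinearMap.fst K V₀ V₁).comp (φ.comp (LinearMap.inl K V₀ V₁))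
        = (d₁ : K) • LinearMap.id := by
      ext v; simp [hφ_app]
    have e2 : (LinearMap.snd K V₀ V₁).comp (φ.comp (LinearMap.inr K V₀ V₁))
        = (d₀ : K) • LinearMap.id := by
      ext v; simp [hφ_app]
    simp only [strEnd, e1, e2, map_smul, LinearMap.trace_id, smul_eq_mul,
      ← hd₀, ← hd₁]
    ring
  have hLt : superDerAction K V₀ V₁ n φ 0 t = 0 := ht φ 0 hhom hstr
  set L : Module.End K (⨂[K] (_ : Fin n), (V₀ × V₁)) :=
    superDerAction K V₀ V₁ n φ 0 with hL
  -- a homogeneous basis of V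
  set b₀ := Module.finBasis K V₀
  set b₁ := Module.finBasis K V₁
  set e : Basis (Fin d₀ ⊕ Fin d₁) K (V₀ × V₁) := b₀.prod b₁ with he
  set wt : (Fin d₀ ⊕ Fin d₁) → ℕ := Sum.elim (fun _ => d₁) (fun _ => d₀)
    with hwt
  have hφe : ∀ s, φ (e s) = (wt s : K) • e s := by
    intro s
    rcases s with j | j <;>
      simp [he, hφ_app, wt, Basis.prod_apply, Prod.smul_mk, Prod.ext_iff]
  have hwt1 : ∀ s, 1 ≤ wt s := by
    rintro (j | j)
    · exact h₁
    · exact h₀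
  -- eigenvalue computation on basis tensors
  have hgpow : gradeInvPow K V₀ V₁ 0 = LinearMap.id := if_pos rfl
  have heig : ∀ f : Fin n → (Fin d₀ ⊕ Fin d₁),
      L ((PiTensorProduct.tprod K) fun k => e (f k))
        = ((∑ i : Fin n, wt (f i) : ℕ) : K) •
            (PiTensorProduct.tprod K) fun k => e (f k) := by
    intro f
    rw [hL, superDerAction, LinearMap.sum_apply]
    have hterm : ∀ i : Fin n,
        (PiTensorProduct.map fun k =>
            if k < i then gradeInvPow K V₀ V₁ 0
            else if k = i then φ else LinearMap.id)
          ((PiTensorProduct.tprod K) fun k => e (f k))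
        = (wt (f i) : K) • (PiTensorProduct.tprod K) fun k => e (f k) := by
      intro i
      rw [PiTensorProduct.map_tprod]
      have hfun : (fun k => (if k < i then gradeInvPow K V₀ V₁ 0
            else if k = i then φ else LinearMap.id) (e (f k)))
          = Function.update (fun k => e (f k)) i ((wt (f i) : K) • e (f i)) := by
        funext k
        rcases eq_or_ne k i with rfl | hk
        · simp [lt_irrefl, hφe, Function.update_self]
        · rw [Function.update_of_ne hk]
          rcases lt_or_ge k i with h | h
          · simp [h, hgpow]
          · have : ¬ k < i := not_lt.mpr h
            simp [this, hk]
      rw [hfun, MultilinearMap.map_update_smul]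
      congr 1
      rw [Function.update_eq_self]
    rw [Finset.sum_congr rfl fun i _ => hterm i, ← Finset.sum_smul]
    congr 1
    push_cast
    rfl
  -- the annihilating polynomial
  set N := n * (d₀ + d₁) with hN
  set lst : List K := List.map (fun k : ℕ => (k : K)) (List.range' 1 N) with hlst
  have hP0 : ((lst.map fun c =>
      L - c • (1 : Module.End K (⨂[K] (_ : Fin n), (V₀ × V₁)))).prod) = 0 := by
    apply PiTensorProduct.ext
    apply Basis.ext_multilinear (fun _ => e)
    intro f
    simp only [LinearMap.compMultilinearMap_apply, LinearMap.zero_comp,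
      LinearMap.zero_apply, MultilinearMap.zero_apply]
    set μ : ℕ := ∑ i : Fin n, wt (f i) with hμ
    have := prod_shift_apply_eigen K L
      ((PiTensorProduct.tprod K) fun k => e (f k)) (μ : K) (heig f) lst
    rw [this]
    have hμmem : μ ∈ List.range' 1 N := by
      rw [List.mem_range'_1]
      constructor
      · calc 1 ≤ n := hn
        _ = ∑ _i : Fin n, 1 := by simp
        _ ≤ μ := Finset.sum_le_sum fun i _ => hwt1 (f i)
      · have : μ ≤ N := by
          calc μ ≤ ∑ _i : Fin n, (d₀ + d₁) := by
                refine Finset.sum_le_sum fun i _ => ?_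
                rcases f i with j | j <;> simp [wt] <;> omega
          _ = N := by simp [hN, mul_comm]
        omega
    have hμlst : (μ : K) ∈ lst := by
      rw [hlst]; exact List.mem_map_of_mem hμmem
    have hmem : (0 : K) ∈ lst.map fun c => (μ : K) - c := by
      simpa using List.mem_map_of_mem (f := fun c => (μ : K) - c) hμlst
    rw [List.prod_eq_zero hmem, zero_smul]
  have hPt := prod_shift_apply_eigen K L t 0 (by rw [hLt, zero_smul]) lst
  rw [hP0] at hPt
  have h0 : (0 : ⨂[K] (_ : Fin n), (V₀ × V₁))
      = ((lst.map fun c => (0 : K) - c).prod) • t := by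
    rw [← hPt]; rfl
  have hne : ((lst.map fun c => (0 : K) - c).prod) ≠ 0 := by
    apply List.prod_ne_zero
    intro hmem
    obtain ⟨x, hx, hzero⟩ := List.mem_map.mp hmem
    rw [hlst] at hx
    obtain ⟨k, hk, rfl⟩ := List.mem_map.mp hx
    rw [List.mem_range'_1] at hk
    have hkne : (k : K) ≠ 0 := Nat.cast_ne_zero.mpr (by omega)
    apply hkne
    have h' : (0 : K) - (k : K) = 0 := hzero
    rw [zero_sub, neg_eq_zero] at h'
    exact h'
  rcases smul_eq_zero.mp h0.symm with h | h
  · exact absurd h hne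
  · exact h
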